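/- For every n ≥ 1, as an identity of rational functions in z: Σ_{F ∈ PF(n)} ∏_{v ∈ F} (2h_v − z)^{h_v − 1} / [h_v · (2h_v − 2 + z)^{h_v − 2}] = (z/n!)·(2n + z)^{n-1}. -/

import Mathlib

/-- Plane trees: nonempty rooted trees whose subtrees at each vertex are linearly ordered. -/
inductive PTree : Type
  | node : List PTree → PTree

namespace PTree

mutual
/-- The number of vertices of a plane tree. -/
def size : PTree → ℕ
  | .node cs => sizeList cs + 1
/-- The total number of vertices of a plane forest (a list of plane trees). -/
def sizeList : List PTree → ℕ
  | [] => 0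
  | t :: ts => size t + sizeList ts
end

mutual
/-- The multiset of hook lengths of a plane tree: the hook length of a vertex
is the number of its descendants, counting the vertex itself. -/
def hooks : PTree → Multiset ℕ+
  | .node cs => ⟨sizeList cs + 1, Nat.succ_pos _⟩ ::ₘ hooksList cs
/-- The multiset of hook lengths of a plane forest. -/
def hooksList : List PTree → Multiset ℕ+
  | [] => 0
  | t :: ts => hooks t + hooksList ts
end

end PTree


open Finset

variable {R : Type*} [CommRing R]

/-- `m`-th finite difference of a polynomial of degree `d < m` vanishes. -/
lemma my_findiff (m : ℕ) : ∀ d < m, ∀ x : R,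
    ∑ k ∈ range (m+1), (-1:R)^k * (m.choose k) * (x + k)^d = 0 := by
  induction m with
  | zero => omega
  | succ m ih =>
    intro d hd x
    have key : ∑ k ∈ range (m+1+1), (-1:R)^k * ((m+1).choose k) * (x + k)^d
        = (∑ k ∈ range (m+1), (-1:R)^k * (m.choose k) * (x + k)^d)
          - ∑ k ∈ range (m+1), (-1:R)^k * (m.choose k) * ((x+1) + k)^d := by
      rw [sum_range_succ' (fun k => (-1:R)^k * ((m+1).choose k) * (x + k)^d) (m+1)]
      have h1 : ∀ k, ((m+1).choose (k+1) : R) = (m.choose k : R) + (m.choose (k+1) : R) := by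
        intro k; rw [Nat.choose_succ_succ]; push_cast; ring
      have split : (∑ k ∈ range (m+1), (-1:R)^(k+1) * ((m+1).choose (k+1)) * (x + (k+1:ℕ))^d)
          = (∑ k ∈ range (m+1), (-1:R)^(k+1) * (m.choose k) * (x + (k+1:ℕ))^d)
            + ∑ k ∈ range (m+1), (-1:R)^(k+1) * (m.choose (k+1)) * (x + (k+1:ℕ))^d := by
        rw [← sum_add_distrib]; apply sum_congr rfl; intro k _; rw [h1]; ring
      rw [split]
      have reassemble : (∑ k ∈ range (m+1), (-1:R)^(k+1) * (m.choose (k+1)) * (x + (k+1:ℕ))^d)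
            + (-1:R)^0 * ((m+1).choose 0) * (x + (0:ℕ))^d
          = ∑ k ∈ range (m+1+1), (-1:R)^k * (m.choose k) * (x + k)^d := by
        rw [sum_range_succ' (fun k => (-1:R)^k * (m.choose k) * (x + k)^d) (m+1)]
        simp
      have last0 : ∑ k ∈ range (m+1+1), (-1:R)^k * (m.choose k) * (x + k)^d
          = ∑ k ∈ range (m+1), (-1:R)^k * (m.choose k) * (x + k)^d := by
        rw [sum_range_succ, Nat.choose_succ_self]; simp
      have shift : (∑ k ∈ range (m+1), (-1:R)^(k+1) * (m.choose k) * (x + (k+1:ℕ))^d)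
          = - ∑ k ∈ range (m+1), (-1:R)^k * (m.choose k) * ((x+1) + k)^d := by
        rw [← sum_neg_distrib]; apply sum_congr rfl; intro k _; push_cast; ring_nf
      linear_combination reassemble + last0 + shift
    rw [key]
    have expand : ∀ k : ℕ, (x + (k:R))^d - ((x+1) + k)^d
        = - ∑ e ∈ range d, ((x + k)^e * (d.choose e)) := by
      intro k
      have : ((x + k) + 1)^d = ∑ e ∈ range (d+1), (x+k)^e * 1^(d-e) * (d.choose e) := add_pow _ _ _
      rw [show (x+1) + (k:R) = (x + k) + 1 by ring, this, sum_range_succ]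
      simp [mul_comm]
    rw [← sum_sub_distrib]
    have : ∀ k ∈ range (m+1), (-1:R)^k * (m.choose k) * (x + k)^d
          - (-1:R)^k * (m.choose k) * ((x+1) + k)^d
        = - ∑ e ∈ range d, (d.choose e : R) * ((-1:R)^k * (m.choose k) * (x + k)^e) := by
      intro k _
      rw [show ((-1:R)^k * (m.choose k) * (x + k)^d - (-1:R)^k * (m.choose k) * ((x+1) + k)^d)
        = (-1:R)^k * (m.choose k) * ((x + (k:R))^d - ((x+1) + k)^d) by ring, expand k]
      rw [mul_neg, mul_sum]
      exact neg_inj.mpr (sum_congr rfl fun e _ => by ring)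
    rw [sum_congr rfl this, sum_neg_distrib, sum_comm, neg_eq_zero]
    apply sum_eq_zero; intro e he; rw [mem_range] at he
    rw [← mul_sum, ih e (by omega) x, mul_zero]

lemma my_choose_swap {n k i : ℕ} (h : k + i ≤ n) :
    n.choose k * (n-k).choose i = n.choose i * (n-i).choose k := by
  have h1 := Nat.choose_mul (n := n) (show k ≤ k+i by omega)
  have h2 := Nat.choose_mul (n := n) (show i ≤ k+i by omega)
  rw [Nat.add_sub_cancel_left] at h1
  rw [show k+i-i = k by omega] at h2
  have hsym : (k+i).choose k = (k+i).choose i := by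
    rw [← Nat.choose_symm (Nat.le_add_right k i)]
    congr 1; omega
  rw [← h1, hsym, h2]

local notation "R" => RatFunc ℚ

instance myRatFuncCharZero : CharZero (RatFunc ℚ) :=
  charZero_of_injective_algebraMap (algebraMap ℚ (RatFunc ℚ)).injective

/-- Abel's terms. -/
noncomputable def aa (k : ℕ) (x : RatFunc ℚ) : RatFunc ℚ :=
  if k = 0 then 1 else x * (x + (k : RatFunc ℚ))^(k-1)

/-- Abel's binomial identity. -/
lemma my_abelA (n : ℕ) (x y : RatFunc ℚ) :
    ∑ k ∈ range (n+1), (n.choose k : RatFunc ℚ) * aa k x * (y + ((n-k : ℕ) : RatFunc ℚ))^(n-k)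
    = (x + y + n)^n := by
  have step1 : ∀ k ∈ range (n+1),
      (n.choose k : R) * aa k x * (y + ((n-k : ℕ):R))^(n-k)
      = ∑ i ∈ range (n+1), (n.choose k : R) * aa k x *
          ((-1:R)^(i+(n-k)) * (x+y+(n:R))^i * (x+(k:R))^((n-k)-i) * ((n-k).choose i : R)) := by
    intro k hk
    rw [mem_range] at hk
    have hc : (y + ((n-k:ℕ):R)) = (x+y+(n:R)) - (x+(k:R)) := by
      push_cast [Nat.cast_sub (by omega : k ≤ n)]; ring
    rw [hc, sub_pow, mul_sum]
    apply Finset.sum_subset (show range ((n-k)+1) ⊆ range (n+1) from range_subset_range.mpr (by omega))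
    intro i hi2 hi
    rw [mem_range, not_lt] at hi
    rw [Nat.choose_eq_zero_of_lt (show n-k < i by omega)]
    simp
  rw [sum_congr rfl step1, sum_comm]
  have step2 : ∀ i ∈ range (n+1),
      (∑ k ∈ range (n+1), (n.choose k : R) * aa k x *
          ((-1:R)^(i+(n-k)) * (x+y+(n:R))^i * (x+(k:R))^((n-k)-i) * ((n-k).choose i : R)))
      = if i = n then (x+y+(n:R))^n else 0 := by
    intro i hi
    rw [mem_range] at hi
    have shrink : (∑ k ∈ range ((n-i)+1), (n.choose k : R) * aa k x *
          ((-1:R)^(i+(n-k)) * (x+y+(n:R))^i * (x+(k:R))^((n-k)-i) * ((n-k).choose i : R)))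
        = ∑ k ∈ range (n+1), (n.choose k : R) * aa k x *
          ((-1:R)^(i+(n-k)) * (x+y+(n:R))^i * (x+(k:R))^((n-k)-i) * ((n-k).choose i : R)) := by
      apply Finset.sum_subset (show range ((n-i)+1) ⊆ range (n+1) from range_subset_range.mpr (by omega))
      intro k hk hk'
      rw [mem_range, not_lt] at hk'
      rw [mem_range] at hk
      rw [Nat.choose_eq_zero_of_lt (show n-k < i by omega)]
      simp
    rw [← shrink]
    by_cases hin : i = n
    · rw [if_pos hin, hin]
      rw [Nat.sub_self, sum_range_one]
      have ha : aa 0 x = 1 := by simp [aa]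
      rw [ha]
      rw [show n - 0 = n by omega]
      rw [Nat.sub_self, Nat.choose_self, Nat.choose_zero_right]
      rw [show n + n = 2*n by omega, pow_mul, neg_one_sq, one_pow]
      push_cast
      ring
    · rw [if_neg hin]
      have hi' : i < n := by omega
      have term : ∀ k ∈ range ((n-i)+1), (n.choose k : R) * aa k x *
          ((-1:R)^(i+(n-k)) * (x+y+(n:R))^i * (x+(k:R))^((n-k)-i) * ((n-k).choose i : R))
          = ((x+y+(n:R))^i * (-1:R)^(i+n) * (n.choose i : R) * x) *
            ((-1:R)^k * ((n-i).choose k : R) * (x+(k:R))^((n-i)-1)) := by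
        intro k hk
        rw [mem_range] at hk
        have hk' : k ≤ n - i := by omega
        have sgn : (-1:R)^(i+(n-k)) = (-1:R)^(i+n) * (-1:R)^k := by
          symm
          rw [← pow_add, show i+n+k = (i+(n-k)) + 2*k by omega, pow_add, pow_mul,
            neg_one_sq, one_pow, mul_one]
        have hch : (n.choose k : R) * ((n-k).choose i : R)
            = (n.choose i : R) * ((n-i).choose k : R) := by
          rw [← Nat.cast_mul, ← Nat.cast_mul, my_choose_swap (by omega)]
        have hpow : aa k x * (x+(k:R))^((n-k)-i) = x * (x+(k:R))^((n-i)-1) := by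
          rcases Nat.eq_zero_or_pos k with hk0 | hk0
          · subst hk0
            have e1 : aa 0 x = 1 := by simp [aa]
            have e2 : x * x^((n-i)-1) = x^(n-i) := by
              rw [← pow_succ']; congr 1; omega
            rw [e1, one_mul, Nat.cast_zero, add_zero, Nat.sub_zero]
            exact e2.symm
          · rw [show aa k x = x * (x+(k:R))^(k-1) by rw [aa, if_neg (by omega)]]
            rw [mul_assoc, ← pow_add, show (k-1) + ((n-k)-i) = (n-i)-1 by omega]
        calc (n.choose k : R) * aa k x *
            ((-1:R)^(i+(n-k)) * (x+y+(n:R))^i * (x+(k:R))^((n-k)-i) * ((n-k).choose i : R))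
            = ((n.choose k : R) * ((n-k).choose i : R)) * (aa k x * (x+(k:R))^((n-k)-i))
              * ((-1:R)^(i+(n-k)) * (x+y+(n:R))^i) := by ring
          _ = ((n.choose i : R) * ((n-i).choose k : R)) * (x * (x+(k:R))^((n-i)-1))
              * (((-1:R)^(i+n) * (-1:R)^k) * (x+y+(n:R))^i) := by rw [hch, hpow, sgn]
          _ = _ := by ring
      rw [sum_congr rfl term, ← mul_sum]
      have h0 := my_findiff (n-i) ((n-i)-1) (by omega) x
      rw [h0, mul_zero]
  rw [sum_congr rfl step2, Finset.sum_ite_eq' (range (n+1)) n (fun _ => (x+y+(n:R))^n)]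
  rw [if_pos (show n ∈ range (n+1) by rw [mem_range]; omega)]

/-- The symmetric Abel identity. -/
lemma my_abelC (m : ℕ) (x y : RatFunc ℚ) :
    ∑ k ∈ range (m+2), ((m+1).choose k : RatFunc ℚ) * (aa k x * aa (m+1-k) y)
    = (x+y) * (x+y+((m:RatFunc ℚ)+1))^m := by
  rw [sum_range_succ' (fun k => ((m+1).choose k : R) * (aa k x * aa (m+1-k) y)) (m+1)]
  have pas : ∀ k ∈ range (m+1), ((m+1).choose (k+1) : R) * (aa (k+1) x * aa (m+1-(k+1)) y)
      = (m.choose k : R) * (aa (k+1) x * aa (m-k) y)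
        + (m.choose (k+1) : R) * (aa (k+1) x * aa (m+1-(k+1)) y) := by
    intro k hk
    rw [Nat.choose_succ_succ, Nat.cast_add, show m+1-(k+1) = m-k by omega]
    ring
  rw [sum_congr rfl pas, sum_add_distrib]
  have reasm : (∑ k ∈ range (m+1), (m.choose (k+1) : R) * (aa (k+1) x * aa (m+1-(k+1)) y))
      + ((m+1).choose 0 : R) * (aa 0 x * aa (m+1-0) y)
      = ∑ k ∈ range (m+1), (m.choose k : R) * (aa k x * aa (m+1-k) y) := by
    have h0 : ((m+1).choose 0 : R) * (aa 0 x * aa (m+1-0) y)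
        = (m.choose 0 : R) * (aa 0 x * aa (m+1-0) y) := by norm_num
    rw [h0, ← sum_range_succ' (fun k => (m.choose k : R) * (aa k x * aa (m+1-k) y)) (m+1),
      sum_range_succ, Nat.choose_succ_self]
    simp
  rw [add_assoc, reasm]
  have sum2 : ∑ k ∈ range (m+1), (m.choose k : R) * (aa k x * aa (m+1-k) y)
      = y * (x+(y+1)+(m:R))^m := by
    rw [← my_abelA m x (y+1), mul_sum]
    apply sum_congr rfl
    intro k hk
    rw [mem_range] at hk
    have h1 : aa (m+1-k) y = y * ((y+1) + ((m-k:ℕ):R))^(m-k) := by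
      rw [aa, if_neg (by omega), show m+1-k-1 = m-k by omega]
      congr 2
      rw [show m+1-k = (m-k)+1 by omega]
      push_cast
      ring
    rw [h1]; ring
  have sum1 : ∑ k ∈ range (m+1), (m.choose k : R) * (aa (k+1) x * aa (m-k) y)
      = x * (y+(x+1)+(m:R))^m := by
    rw [← sum_range_reflect (fun k => (m.choose k : R) * (aa (k+1) x * aa (m-k) y)) (m+1)]
    rw [← my_abelA m y (x+1), mul_sum]
    apply sum_congr rfl
    intro j hj
    rw [mem_range] at hj
    have hsym : (m.choose (m+1-1-j) : R) = (m.choose j : R) := by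
      congr 1
      rw [show m+1-1-j = m-j by omega, Nat.choose_symm (by omega)]
    have h2 : aa ((m+1-1-j)+1) x = x * ((x+1) + ((m-j:ℕ):R))^(m-j) := by
      rw [aa, if_neg (by omega), show m+1-1-j+1-1 = m-j by omega]
      congr 2
      rw [show m+1-1-j+1 = (m-j)+1 by omega]
      push_cast
      ring
    have h3 : m - (m+1-1-j) = j := by omega
    rw [hsym, h2, h3]
    ring
  rw [sum1, sum2]
  ring

/-- Right-hand sides: `gg n = z (2n+z)^{n-1} / n!`. -/
noncomputable def gg : ℕ → RatFunc ℚ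
  | 0 => 1
  | (m+1) => RatFunc.X * (2*((m : RatFunc ℚ)+1) + RatFunc.X)^m / ((m+1).factorial : RatFunc ℚ)

lemma my_fact_ne (k : ℕ) : ((k.factorial : R)) ≠ 0 :=
  Nat.cast_ne_zero.mpr (Nat.factorial_ne_zero k)

lemma my_gg_eq (b : ℕ) : gg b = 2^b * aa b (RatFunc.X/2) / (b.factorial : R) := by
  cases b with
  | zero => simp [gg, aa]
  | succ m =>
    simp only [gg, aa, if_neg (Nat.succ_ne_zero m)]
    congr 1
    have h : (2*((m:R)+1) + RatFunc.X) = 2*((RatFunc.X/2) + ((m+1:ℕ):R)) := by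
      push_cast; ring
    rw [h, mul_pow, show m+1-1 = m from rfl]
    ring

lemma my_fA (a : ℕ) : RatFunc.X * (2*((a:R)+1) - RatFunc.X)^a
    = -(2:R)^(a+1) * aa (a+1) (-(RatFunc.X)/2) := by
  rw [aa, if_neg (Nat.succ_ne_zero a), show a+1-1 = a from rfl]
  have h : (2*((a:R)+1) - RatFunc.X) = 2*(-(RatFunc.X)/2 + ((a+1:ℕ):R)) := by
    push_cast; ring
  rw [h, mul_pow]
  ring

lemma my_conv (n : ℕ) :
    ∑ a ∈ range (n+1),
      (RatFunc.X * (2*((a:R)+1) - RatFunc.X)^a / ((a+1).factorial : R)) * gg (n-a)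
    = gg (n+1) := by
  have habel := my_abelC n (-(RatFunc.X)/2) (RatFunc.X/2)
  rw [show (-(RatFunc.X)/2 + RatFunc.X/2 : R) = 0 by ring, zero_mul] at habel
  have hsum : ∑ k ∈ range (n+2),
      (aa k (-(RatFunc.X)/2) * aa (n+1-k) (RatFunc.X/2))
        / ((k.factorial : R) * ((n+1-k).factorial : R)) = 0 := by
    have h2 : ∀ k ∈ range (n+2), ((n+1).choose k : R) *
        (aa k (-(RatFunc.X)/2) * aa (n+1-k) (RatFunc.X/2))
        = ((n+1).factorial : R) * ((aa k (-(RatFunc.X)/2) * aa (n+1-k) (RatFunc.X/2))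
            / ((k.factorial : R) * ((n+1-k).factorial : R))) := by
      intro k hk
      rw [mem_range] at hk
      rw [Nat.cast_choose R (show k ≤ n+1 by omega)]
      field_simp
    rw [sum_congr rfl h2, ← mul_sum] at habel
    exact (mul_eq_zero.mp habel).resolve_left (my_fact_ne (n+1))
  rw [sum_range_succ' (fun k => (aa k (-(RatFunc.X)/2) * aa (n+1-k) (RatFunc.X/2))
        / ((k.factorial : R) * ((n+1-k).factorial : R))) (n+1)] at hsum
  have hT0 : (aa 0 (-(RatFunc.X)/2) * aa (n+1-0) (RatFunc.X/2))
        / (((0:ℕ).factorial : R) * ((n+1-0).factorial : R))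
      = aa (n+1) (RatFunc.X/2) / ((n+1).factorial : R) := by
    simp [aa]
  rw [hT0] at hsum
  have term : ∀ a ∈ range (n+1),
      (RatFunc.X * (2*((a:R)+1) - RatFunc.X)^a / ((a+1).factorial : R)) * gg (n-a)
      = -(2:R)^(n+1) * ((aa (a+1) (-(RatFunc.X)/2) * aa (n+1-(a+1)) (RatFunc.X/2))
          / (((a+1).factorial : R) * ((n+1-(a+1)).factorial : R))) := by
    intro a ha
    rw [mem_range] at ha
    rw [my_fA a, my_gg_eq (n-a), show n+1-(a+1) = n-a by omega]
    rw [div_mul_div_comm, mul_div_assoc']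
    congr 1
    rw [show (2:R)^(n+1) = 2^(a+1) * 2^(n-a) by rw [← pow_add]; congr 1; omega]
    ring
  rw [sum_congr rfl term, ← mul_sum]
  have hS : ∑ a ∈ range (n+1), (aa (a+1) (-(RatFunc.X)/2) * aa (n+1-(a+1)) (RatFunc.X/2))
          / (((a+1).factorial : R) * ((n+1-(a+1)).factorial : R))
      = - (aa (n+1) (RatFunc.X/2) / ((n+1).factorial : R)) := by
    linear_combination hsum
  rw [hS, my_gg_eq (n+1)]
  ring
section Comb

open Finset

local notation "K" => RatFunc ℚ

lemma PTree.size_pos (t : PTree) : 1 ≤ t.size := by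
  cases t with
  | node cs => rw [PTree.size]; omega

/-- Decapitation map used to prove finiteness. -/
def PTree.decap : List PTree → Option (List PTree × List PTree)
  | [] => none
  | (PTree.node cs) :: ts => some (cs, ts)

lemma PTree.decap_inj : Function.Injective PTree.decap := by
  intro a b h
  match a, b with
  | [], [] => rfl
  | [], (PTree.node cs) :: ts => simp [PTree.decap] at h
  | (PTree.node cs) :: ts, [] => simp [PTree.decap] at h
  | (PTree.node cs) :: ts, (PTree.node cs') :: ts' =>
    simp only [PTree.decap, Option.some.injEq, Prod.mk.injEq] at h
    rw [h.1, h.2]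

lemma PTree.finite_le (n : ℕ) : {l : List PTree | PTree.sizeList l ≤ n}.Finite := by
  induction n with
  | zero =>
    apply Set.Finite.subset (Set.finite_singleton ([] : List PTree))
    intro l hl
    match l with
    | [] => rfl
    | t :: ts =>
      exfalso
      simp only [Set.mem_setOf_eq, PTree.sizeList] at hl
      have := PTree.size_pos t
      omega
  | succ n ih =>
    apply Set.Finite.of_finite_image _ (PTree.decap_inj.injOn)
    apply Set.Finite.subset (Set.Finite.insert none
      ((Set.Finite.prod ih ih).image (fun p => some p)))
    rintro y ⟨l, hl, rfl⟩
    simp only [Set.mem_setOf_eq] at hl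
    match l with
    | [] => exact Set.mem_insert _ _
    | (PTree.node cs) :: ts =>
      apply Set.mem_insert_of_mem
      refine ⟨(cs, ts), ?_, rfl⟩
      rw [PTree.sizeList, PTree.size] at hl
      exact ⟨by simp; omega, by simp; omega⟩

lemma PTree.finite_eq (n : ℕ) : {l : List PTree | PTree.sizeList l = n}.Finite :=
  (PTree.finite_le n).subset (fun _ hl => le_of_eq hl)

/-- The finset of plane forests with `n` vertices. -/
noncomputable def PFs (n : ℕ) : Finset (List PTree) := (PTree.finite_eq n).toFinset

lemma mem_PFs {n : ℕ} {l : List PTree} : l ∈ PFs n ↔ PTree.sizeList l = n :=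
  Set.Finite.mem_toFinset _

/-- The weight of a single hook length. -/
noncomputable def wt (h : ℕ+) : K :=
  (2 * ((h : ℕ) : K) - RatFunc.X) ^ ((h : ℕ) - 1) /
    (((h : ℕ) : K) * (2 * ((h : ℕ) : K) - 2 + RatFunc.X) ^ (((h : ℕ) : ℤ) - 2))

/-- Weight of a hook length given as a natural number. -/
noncomputable def phi (m : ℕ) : K :=
  (2 * (m : K) - RatFunc.X) ^ (m - 1) /
    ((m : K) * (2 * (m : K) - 2 + RatFunc.X) ^ ((m : ℤ) - 2))

lemma wt_mk (m : ℕ) (hm : 0 < m) : wt ⟨m, hm⟩ = phi m := rfl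

/-- The weight of a forest. -/
noncomputable def WF (l : List PTree) : K := ((PTree.hooksList l).map wt).prod

/-- The weight of a tree. -/
noncomputable def WT (t : PTree) : K := ((PTree.hooks t).map wt).prod

lemma WF_nil : WF [] = 1 := by simp [WF, PTree.hooksList]

lemma WF_cons (t : PTree) (ts : List PTree) : WF (t :: ts) = WT t * WF ts := by
  rw [WF, WT, WF, PTree.hooksList, Multiset.map_add, Multiset.prod_add]

lemma WT_node (cs : List PTree) :
    WT (PTree.node cs) = phi (PTree.sizeList cs + 1) * WF cs := by
  rw [WT, WF, PTree.hooks]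
  exact (congrArg Multiset.prod (Multiset.map_cons wt _ _)).trans (Multiset.prod_cons _ _)

/-- Sum over the forests with `n` vertices. -/
noncomputable def SS (n : ℕ) : K := ∑ l ∈ PFs n, WF l

lemma PFs_zero : PFs 0 = {[]} := by
  ext l
  rw [mem_PFs, Finset.mem_singleton]
  constructor
  · intro hl
    match l with
    | [] => rfl
    | t :: ts =>
      exfalso
      rw [PTree.sizeList] at hl
      have := PTree.size_pos t
      omega
  · rintro rfl
    rfl

lemma SS_zero : SS 0 = 1 := by
  rw [SS, PFs_zero, Finset.sum_singleton, WF_nil]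

lemma SS_succ (n : ℕ) :
    SS (n+1) = ∑ a ∈ range (n+1), phi (a+1) * SS a * SS (n-a) := by
  rw [SS]
  have key : ∑ l ∈ PFs (n+1), WF l
      = ∑ x ∈ (range (n+1)).sigma (fun a => PFs a ×ˢ PFs (n-a)),
          WF (PTree.node x.2.1 :: x.2.2) := by
    apply Finset.sum_nbij'
      (i := fun l => match l with
        | (PTree.node cs) :: ts => (⟨PTree.sizeList cs, (cs, ts)⟩ : Σ _ : ℕ, List PTree × List PTree)
        | [] => ⟨0, ([], [])⟩)
      (j := fun x => (PTree.node x.2.1) :: x.2.2)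
    · intro l hl
      rw [mem_PFs] at hl
      match l with
      | [] => exact absurd hl (by rw [PTree.sizeList]; omega)
      | (PTree.node cs) :: ts =>
        rw [PTree.sizeList, PTree.size] at hl
        simp only [Finset.mem_sigma, Finset.mem_range, Finset.mem_product, mem_PFs]
        exact ⟨by omega, by simp, by omega⟩
    · intro x hx
      simp only [Finset.mem_sigma, Finset.mem_range, Finset.mem_product, mem_PFs] at hx
      rw [mem_PFs, PTree.sizeList, PTree.size, hx.2.1, hx.2.2]
      omega
    · intro l hl
      rw [mem_PFs] at hl
      match l with
      | [] => exact absurd hl (by rw [PTree.sizeList]; omega)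
      | (PTree.node cs) :: ts => rfl
    · rintro ⟨a, cs, ts⟩ hx
      simp only [Finset.mem_sigma, Finset.mem_range, Finset.mem_product, mem_PFs] at hx
      obtain ⟨-, hcs, -⟩ := hx
      subst hcs
      rfl
    · intro l hl
      rw [mem_PFs] at hl
      match l with
      | [] => exact absurd hl (by rw [PTree.sizeList]; omega)
      | (PTree.node cs) :: ts => rfl
  rw [key, Finset.sum_sigma]
  apply Finset.sum_congr rfl
  intro a _
  rw [Finset.sum_product]
  have h1 : ∀ cs ∈ PFs a, ∑ ts ∈ PFs (n-a), WF (PTree.node cs :: ts)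
      = phi (a+1) * WF cs * SS (n-a) := by
    intro cs hcs
    rw [SS, Finset.mul_sum]
    apply Finset.sum_congr rfl
    intro ts _
    rw [WF_cons, WT_node, mem_PFs.mp hcs]
  rw [Finset.sum_congr rfl h1, ← Finset.sum_mul, ← Finset.mul_sum]
  rfl

end Comb
section Final

open Finset

local notation "K" => RatFunc ℚ

lemma my_nXnz (m : ℕ) : ((m : K)) + RatFunc.X ≠ 0 := by
  have h : ((m : K)) + RatFunc.X
      = algebraMap (Polynomial ℚ) (RatFunc ℚ) (Polynomial.C (m:ℚ) + Polynomial.X) := by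
    rw [map_add, RatFunc.algebraMap_C, RatFunc.algebraMap_X, map_natCast]
  rw [h]
  apply RatFunc.algebraMap_ne_zero
  intro hc
  have h2 := congrArg (fun p => Polynomial.coeff p 1) hc
  simp at h2

lemma phi_one : phi 1 = RatFunc.X := by
  rw [phi]
  have h1 : ((1:ℕ) : K) = 1 := by norm_num
  have h2 : (((1:ℕ) : ℤ) - 2) = -1 := by norm_num
  rw [h1, h2, zpow_neg_one]
  have h3 : 2 * (1:K) - 2 + RatFunc.X = RatFunc.X := by ring
  rw [h3]
  simp [RatFunc.X_ne_zero]

lemma phi_gg (a : ℕ) : phi (a+1) * gg a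
    = RatFunc.X * (2*((a:K)+1) - RatFunc.X)^a / ((a+1).factorial : K) := by
  cases a with
  | zero =>
    rw [phi_one]
    simp [gg]
  | succ b =>
    have hw : 2*((b:K)+1) + RatFunc.X ≠ 0 := by
      rw [show 2*((b:K)+1) = ((2*b+2:ℕ):K) by push_cast; ring]
      exact my_nXnz _
    have hz : (2*((b+2:ℕ):K) - 2 + RatFunc.X) ^ (((b+2:ℕ):ℤ) - 2)
        = (2*((b:K)+1) + RatFunc.X) ^ b := by
      rw [show ((b+2:ℕ):ℤ) - 2 = (b:ℤ) by push_cast; ring, zpow_natCast]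
      congr 1
      push_cast
      ring
    rw [show b+1+1 = b+2 from rfl, phi, hz, gg]
    have hne2 : (2*((b:K)+1) + RatFunc.X)^b ≠ 0 := pow_ne_zero _ hw
    rw [show b+2-1 = b+1 from rfl]
    rw [div_mul_div_comm]
    rw [show ((b+2:ℕ):K) * (2*((b:K)+1) + RatFunc.X)^b * ((b+1).factorial : K)
        = (2*((b:K)+1) + RatFunc.X)^b * (((b+2).factorial : K)) by
      rw [show (b+2).factorial = (b+2)*(b+1).factorial from rfl]; push_cast; ring]
    rw [show (2*((b+2:ℕ):K) - RatFunc.X)^(b+1) * (RatFunc.X * (2*((b:K)+1) + RatFunc.X)^b)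
        = (2*((b:K)+1) + RatFunc.X)^b * (RatFunc.X * (2*((b+2:ℕ):K) - RatFunc.X)^(b+1)) by
      ring]
    rw [mul_div_mul_left _ _ hne2]
    rw [show (2*((b+2:ℕ):K) - RatFunc.X) = 2*(((b+1:ℕ):K)+1) - RatFunc.X by push_cast; ring]

lemma S_eq (n : ℕ) : SS n = gg n := by
  induction n using Nat.strong_induction_on with
  | _ n ih =>
    cases n with
    | zero => rw [SS_zero]; rfl
    | succ m =>
      rw [SS_succ]
      have hterm : ∀ a ∈ range (m+1), phi (a+1) * SS a * SS (m-a)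
          = (RatFunc.X * (2*((a:K)+1) - RatFunc.X)^a / ((a+1).factorial : K)) * gg (m-a) := by
        intro a ha
        rw [mem_range] at ha
        rw [ih a (by omega), ih (m-a) (by omega), phi_gg]
      rw [sum_congr rfl hterm, my_conv]

end Final

/-- The Abel-type hook length formula for plane forests, as an identity in `ℚ(z)`. -/
theorem abel_hook_formula_plane_forests (n : ℕ) (hn : 1 ≤ n) :
    letI K := RatFunc ℚ
    letI z : K := RatFunc.X
    ∑ᶠ F : {l : List PTree // PTree.sizeList l = n},
      (PTree.hooksList (F : List PTree) |>.map fun h =>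
        (2 * ((h : ℕ) : K) - z) ^ ((h : ℕ) - 1) /
        (((h : ℕ) : K) * (2 * ((h : ℕ) : K) - 2 + z) ^ (((h : ℕ) : ℤ) - 2))).prod
    = z / (n.factorial : K) * (2 * (n : K) + z) ^ (n - 1) := by
  obtain ⟨m, rfl⟩ : ∃ m, n = m+1 := ⟨n-1, by omega⟩
  haveI : Fintype {l : List PTree // PTree.sizeList l = m+1} := (PTree.finite_eq (m+1)).fintype
  have h1 : gg (m+1) = RatFunc.X / (((m+1).factorial : ℕ) : RatFunc ℚ)
      * (2*((m+1:ℕ):RatFunc ℚ) + RatFunc.X)^(m+1-1) := by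
    rw [gg, show m+1-1 = m from rfl]
    push_cast
    ring
  rw [finsum_eq_sum_of_fintype]
  trans (∑ F : {l : List PTree // PTree.sizeList l = m+1}, WF (F : List PTree))
  · apply Finset.sum_congr rfl
    intro F _
    simp only [bind_pure_comp, Multiset.fmap_def, Multiset.map_map]
    rfl
  · exact ((Finset.sum_subtype _ (fun _ => mem_PFs) WF).symm).trans ((S_eq (m+1)).trans h1)
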